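/- Let n ≥ 2 and m ≥ 1 with m + 1 ≤ n, and let η : (Fin (m+1) → Fin n) → (Fin (m+1) → Fin n) → ℝ satisfy: (i) η (I ∘ σ) J = sign(σ) · η I J and η I (J ∘ σ) = sign(σ) · η I J for every permutation σ of Fin (m+1) (antisymmetry in each index block); (ii) η I J = η J I; (iii) Lorentz invariance: for every Lorentz matrix A and all I, J, η I J = Σ_{I′, J′ : Fin (m+1) → Fin n} (∏_{r} A (I r) (I′ r)) · (∏_{s} A (J s) (J′ s)) · η I′ J′. Then there exists c ∈ ℝ such that for every alternating ω : (Fin (m+1) → Fin n) → ℝ (i.e. ω (I ∘ σ) = sign(σ) · ω I for all permutations σ): Σ_{I, J} η I J · ω I · ω J = c · Σ_I (∏_{r} ε (I r)) · (ω I)². -/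

import Mathlib

open Matrix
open Function

noncomputable section

namespace GeomActions

/-- Signature function: `ε 0 = −1`, `ε i = 1` for `i ≠ 0`. -/
def eps (n : ℕ) (i : Fin n) : ℝ := if (i : ℕ) = 0 then -1 else 1

/-- The Minkowski form `η = diag(−1, 1, …, 1)` of signature `(1, n−1)`. -/
def etaMat (n : ℕ) : Matrix (Fin n) (Fin n) ℝ := Matrix.diagonal (eps n)

/-- The space of (components of) 2-jets of metrics: triples `(w₂, w₃, w₄)` encoding
`(g_{ij}, g_{ij,k}, g_{ij,kl})` at a point in a chart. -/
abbrev W (n : ℕ) :=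
  (Fin n → Fin n → ℝ) × (Fin n → Fin n → Fin n → ℝ) × (Fin n → Fin n → Fin n → Fin n → ℝ)

/-- An admissible parameter triple `(J, S, C)` for a coordinate change:
`J` invertible, `S` symmetric in its last two indices, `C` symmetric in its last three. -/
structure Admissible (n : ℕ) (J : Matrix (Fin n) (Fin n) ℝ)
    (S : Fin n → Fin n → Fin n → ℝ) (C : Fin n → Fin n → Fin n → Fin n → ℝ) : Prop where
  hJ : IsUnit J
  hS : ∀ a i k, S a i k = S a k i
  hC1 : ∀ a i k l, C a i k l = C a k i l
  hC2 : ∀ a i k l, C a i k l = C a i l k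

/-- Transformation rule `Φ_{J,S,C}` for the 2-jet of a metric under a coordinate change. -/
def Phi (n : ℕ) (J : Matrix (Fin n) (Fin n) ℝ) (S : Fin n → Fin n → Fin n → ℝ)
    (C : Fin n → Fin n → Fin n → Fin n → ℝ) (w : W n) : W n :=
  ⟨fun i j => ∑ a, ∑ b, J a i * J b j * w.1 a b,
   fun i j k =>
     (∑ a, ∑ b, ∑ c, J a i * J b j * J c k * w.2.1 a b c) +
       ∑ a, ∑ b, (S a i k * J b j + J a i * S b j k) * w.1 a b,
   fun i j k l =>
     (∑ a, ∑ b, ∑ c, ∑ d, J a i * J b j * J c k * J d l * w.2.2 a b c d) +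
     (∑ a, ∑ b, ∑ c,
       (S a i l * J b j * J c k + J a i * S b j l * J c k + J a i * J b j * S c k l +
         J c l * S a i k * J b j + J c l * J a i * S b j k) * w.2.1 a b c) +
     ∑ a, ∑ b,
       (S a i k * S b j l + S a i l * S b j k + C a i k l * J b j + J a i * C b j k l) * w.1 a b⟩

/-- `w ∈ W n` is a metric 2-jet: `w₂` symmetric and congruent to `η`, and `w₃`, `w₄`
have the symmetries of derivatives of a metric. -/
def MetricJet (n : ℕ) (w : W n) : Prop :=
  (∀ i j, w.1 i j = w.1 j i) ∧
  (∃ P : Matrix (Fin n) (Fin n) ℝ, IsUnit P ∧ Pᵀ * Matrix.of w.1 * P = etaMat n) ∧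
  (∀ i j k, w.2.1 i j k = w.2.1 j i k) ∧
  (∀ i j k l, w.2.2 i j k l = w.2.2 j i k l ∧ w.2.2 i j k l = w.2.2 i j l k)

/-- The symmetries `w i j k l = w j i k l = w i j l k` of the second-derivative variables. -/
def SymW4 (n : ℕ) (w : Fin n → Fin n → Fin n → Fin n → ℝ) : Prop :=
  ∀ i j k l, w i j k l = w j i k l ∧ w i j k l = w i j l k

/-- Symmetry under all permutations of the last three arguments. -/
def Sym3Last (n : ℕ) (c : Fin n → Fin n → Fin n → Fin n → ℝ) : Prop :=
  ∀ i j k l, c i j k l = c i k j l ∧ c i j k l = c i j l k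

/-- The scalar curvature at a point, in Lorentz normal coordinates where
`g_{ij} = η i j`, `g_{ij,k} = 0`, `g_{ij,kl} = w4 i j k l`. -/
def Rform (n : ℕ) (w4 : Fin n → Fin n → Fin n → Fin n → ℝ) : ℝ :=
  ∑ i, ∑ j, eps n i * eps n j * (w4 i j i j - w4 i i j j)

/-- The contravariant Ricci tensor at a point, in Lorentz normal coordinates. -/
def Ricform (n : ℕ) (w4 : Fin n → Fin n → Fin n → Fin n → ℝ) (i j : Fin n) : ℝ :=
  (1 / 2) * eps n i * eps n j *
    ∑ k, eps n k * (w4 i k j k + w4 j k i k - w4 i j k k - w4 k k i j)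

/-- The space of 2-jets of a metric together with 1-jets `(D_I, D_{I,j})` of a
type-(0,m) tensor field. -/
abbrev Y (n m : ℕ) :=
  W n × ((Fin m → Fin n) → ℝ) × ((Fin m → Fin n) → Fin n → ℝ)

/-- Transformation rule `Ψ_{J,S,C}` for the pair (metric 2-jet, matter field 1-jet). -/
def Psi (n m : ℕ) (J : Matrix (Fin n) (Fin n) ℝ) (S : Fin n → Fin n → Fin n → ℝ)
    (C : Fin n → Fin n → Fin n → Fin n → ℝ) (p : Y n m) : Y n m :=
  ⟨Phi n J S C p.1,
   fun I => ∑ A : Fin m → Fin n, (∏ r, J (A r) (I r)) * p.2.1 A,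
   fun I j =>
     (∑ A : Fin m → Fin n, ∑ b, (∏ r, J (A r) (I r)) * J b j * p.2.2 A b) +
     ∑ r : Fin m, ∑ A : Fin m → Fin n,
       S (A r) (I r) j * (∏ s ∈ Finset.univ.erase r, J (A s) (I s)) * p.2.1 A⟩

/-- The full antisymmetrisation `Alt y′` of the rank-(m+1) tensor
`z I = y′ (I ∘ castSucc) (I (last m))` determined by the derivative variables `y′`. -/
def altD (n m : ℕ) (y' : (Fin m → Fin n) → Fin n → ℝ) (I : Fin (m + 1) → Fin n) : ℝ :=
  (1 / (Nat.factorial (m + 1) : ℝ)) *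
    ∑ σ : Equiv.Perm (Fin (m + 1)),
      ((Equiv.Perm.sign σ : ℤ) : ℝ) *
        y' (fun r => I (σ (Fin.castSucc r))) (I (σ (Fin.last m)))

/-- Lorentz matrices: `Aᵀ * η * A = η`. -/
def IsLorentz (n : ℕ) (A : Matrix (Fin n) (Fin n) ℝ) : Prop :=
  Aᵀ * etaMat n * A = etaMat n

/-- Lorentz invariance of a rank-2 tensor. -/
def LorentzInv2 (n : ℕ) (b : Fin n → Fin n → ℝ) : Prop :=
  ∀ A : Matrix (Fin n) (Fin n) ℝ, IsLorentz n A →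
    ∀ i j, b i j = ∑ p, ∑ q, A i p * A j q * b p q

/-- Lorentz invariance of a rank-4 tensor. -/
def LorentzInv4 (n : ℕ) (a : Fin n → Fin n → Fin n → Fin n → ℝ) : Prop :=
  ∀ A : Matrix (Fin n) (Fin n) ℝ, IsLorentz n A →
    ∀ i j k l, a i j k l = ∑ p, ∑ q, ∑ r, ∑ s, A i p * A j q * A k r * A l s * a p q r s

/-- Lorentz invariance of a rank-6 tensor. -/
def LorentzInv6 (n : ℕ) (a : Fin n → Fin n → Fin n → Fin n → Fin n → Fin n → ℝ) : Prop :=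
  ∀ A : Matrix (Fin n) (Fin n) ℝ, IsLorentz n A →
    ∀ i j k l m p, a i j k l m p =
      ∑ a₁, ∑ a₂, ∑ a₃, ∑ a₄, ∑ a₅, ∑ a₆,
        A i a₁ * A j a₂ * A k a₃ * A l a₄ * A m a₅ * A p a₆ * a a₁ a₂ a₃ a₄ a₅ a₆

/-- Lorentz invariance of a rank-k tensor indexed by `Fin k → Fin n`. -/
def LorentzInvT (n k : ℕ) (T : (Fin k → Fin n) → ℝ) : Prop :=
  ∀ A : Matrix (Fin n) (Fin n) ℝ, IsLorentz n A →
    ∀ I : Fin k → Fin n, T I = ∑ J : Fin k → Fin n, (∏ r, A (I r) (J r)) * T J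

/-- Number of occurrences of `v` among `(i, j, k, l)`. -/
def cnt4 (n : ℕ) (i j k l v : Fin n) : ℕ :=
  (if i = v then 1 else 0) + (if j = v then 1 else 0) + (if k = v then 1 else 0) +
    (if l = v then 1 else 0)

/-- Coordinate direction in the `w₂`-variables. -/
def e2 (n : ℕ) (i j : Fin n) : W n :=
  ⟨fun a b => if a = i ∧ b = j then 1 else 0, 0, 0⟩

/-- Coordinate direction in the `w₃`-variables. -/
def e3 (n : ℕ) (i j k : Fin n) : W n :=
  ⟨0, fun a b c => if a = i ∧ b = j ∧ c = k then 1 else 0, 0⟩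

/-- Coordinate direction in the `w₄`-variables. -/
def e4 (n : ℕ) (i j k l : Fin n) : W n :=
  ⟨0, 0, fun a b c d => if a = i ∧ b = j ∧ c = k ∧ d = l then 1 else 0⟩

/-- Coordinate direction in the `y′`-variables. -/
def eY' (n m : ℕ) (I : Fin m → Fin n) (j : Fin n) : Y n m :=
  ⟨0, 0, fun A b => if A = I ∧ b = j then 1 else 0⟩

section Aux
variable {n k : ℕ}

lemma sum_prod_single (c : Fin k → Fin n → ℝ) (g : Fin k → Fin n)
    (h : ∀ r j, j ≠ g r → c r j = 0) (f : (Fin k → Fin n) → ℝ) :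
    ∑ x : Fin k → Fin n, (∏ r, c r (x r)) * f x = (∏ r, c r (g r)) * f g := by
  apply Finset.sum_eq_single_of_mem g (Finset.mem_univ g)
  intro x _ hx
  obtain ⟨r, hr⟩ : ∃ r, x r ≠ g r := by
    by_contra hc
    push_neg at hc
    exact hx (funext hc)
  rw [Finset.prod_eq_zero (Finset.mem_univ r) (h r (x r) hr), zero_mul]

lemma sum_prod_double (c : Fin k → Fin n → ℝ) (g g' : Fin k → Fin n) (r₀ : Fin k)
    (hgg' : ∀ r, r ≠ r₀ → g r = g' r) (hne : g r₀ ≠ g' r₀)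
    (h : ∀ r j, j ≠ g r → j ≠ g' r → c r j = 0) (f : (Fin k → Fin n) → ℝ) :
    ∑ x : Fin k → Fin n, (∏ r, c r (x r)) * f x
      = (∏ r, c r (g r)) * f g + (∏ r, c r (g' r)) * f g' := by
  have hgg : g ≠ g' := fun hc => hne (congrFun hc r₀)
  rw [← Finset.sum_pair (f := fun x => (∏ r, c r (x r)) * f x) hgg]
  symm
  apply Finset.sum_subset (Finset.subset_univ _)
  intro x _ hx
  simp only [Finset.mem_insert, Finset.mem_singleton, not_or] at hx
  obtain ⟨hx1, hx2⟩ := hx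
  by_cases hoff : ∀ r, r ≠ r₀ → x r = g r
  · have h1 : x r₀ ≠ g r₀ := by
      intro hc
      apply hx1
      funext r
      by_cases hr : r = r₀
      · rw [hr, hc]
      · exact hoff r hr
    have h2 : x r₀ ≠ g' r₀ := by
      intro hc
      apply hx2
      funext r
      by_cases hr : r = r₀
      · rw [hr, hc]
      · rw [hoff r hr, hgg' r hr]
    rw [Finset.prod_eq_zero (Finset.mem_univ r₀) (h r₀ (x r₀) h1 h2), zero_mul]
  · push_neg at hoff
    obtain ⟨r, hr, hxr⟩ := hoff
    have := h r (x r) hxr (by rw [← hgg' r hr]; exact hxr)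
    rw [Finset.prod_eq_zero (Finset.mem_univ r) this, zero_mul]

lemma prod_flip (I : Fin k → Fin n) (hI : Injective I) (v : Fin n) :
    (∏ r, if I r = v then (-1:ℝ) else 1) = if v ∈ Set.range I then -1 else 1 := by
  by_cases hv : v ∈ Set.range I
  · obtain ⟨r₀, hr₀⟩ := hv
    rw [if_pos ⟨r₀, hr₀⟩]
    rw [Finset.prod_eq_single r₀ (fun b _ hb => if_neg (fun hc => hb (hI (hc.trans hr₀.symm))))
      (fun hc => absurd (Finset.mem_univ r₀) hc), if_pos hr₀]
  · rw [if_neg hv]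
    apply Finset.prod_eq_one
    intro r _
    exact if_neg (fun hc => hv ⟨r, hc⟩)

lemma eps_eq (hn : 0 < n) (x : Fin n) : eps n x = if x = ⟨0, hn⟩ then -1 else 1 := by
  simp [eps, Fin.ext_iff]

lemma isLorentz_flip (v : Fin n) :
    IsLorentz n (Matrix.diagonal (fun i => if i = v then (-1:ℝ) else 1)) := by
  unfold IsLorentz etaMat
  rw [Matrix.diagonal_transpose, Matrix.diagonal_mul_diagonal, Matrix.diagonal_mul_diagonal]
  apply congrArg Matrix.diagonal
  funext i
  split <;> ring

lemma isLorentz_perm (hn : 0 < n) (π : Equiv.Perm (Fin n)) (hπ : π ⟨0, hn⟩ = ⟨0, hn⟩) :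
    IsLorentz n (Matrix.of fun i j => if i = π j then (1:ℝ) else 0) := by
  unfold IsLorentz etaMat
  ext j k
  rw [Matrix.mul_assoc, Matrix.mul_apply]
  have : ∀ i, (Matrix.of fun i j => if i = π j then (1:ℝ) else 0)ᵀ j i *
      (Matrix.diagonal (eps n) * Matrix.of fun i j => if i = π j then (1:ℝ) else 0) i k
      = (if i = π j then (1:ℝ) else 0) * (eps n i * if i = π k then 1 else 0) := by
    intro i
    rw [Matrix.transpose_apply, Matrix.diagonal_mul]
    rfl
  rw [Finset.sum_congr rfl (fun i _ => this i)]
  rw [Finset.sum_eq_single_of_mem (π j) (Finset.mem_univ _)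
    (fun i _ hi => by rw [if_neg hi, zero_mul])]
  have hiff : ∀ x : Fin n, π x = ⟨0, hn⟩ ↔ x = ⟨0, hn⟩ := by
    intro x
    constructor
    · intro h; exact π.injective (h.trans hπ.symm)
    · intro h; rw [h, hπ]
  have heps : eps n (π j) = eps n j := by
    rw [eps_eq hn, eps_eq hn]
    simp only [hiff]
  rw [if_pos rfl, one_mul, heps]
  by_cases hjk : j = k
  · subst hjk
    rw [if_pos rfl, Matrix.diagonal_apply_eq, mul_one]
  · rw [if_neg (fun hc => hjk (π.injective hc)), Matrix.diagonal_apply_ne _ hjk, mul_zero]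

lemma exists_perm_extend (f g : Fin k → Fin n) (hf : Injective f) (hg : Injective g) :
    ∃ π : Equiv.Perm (Fin n), ∀ r, π (f r) = g r := by
  classical
  have hcard : Fintype.card ↥(Set.range f)ᶜ = Fintype.card ↥(Set.range g)ᶜ := by
    rw [Fintype.card_compl_set, Fintype.card_compl_set,
      Set.card_range_of_injective hf, Set.card_range_of_injective hg]
  refine ⟨(Equiv.Set.sumCompl (Set.range f)).symm.trans
    ((Equiv.sumCongr ((Equiv.ofInjective f hf).symm.trans (Equiv.ofInjective g hg))
      (Fintype.equivOfCardEq hcard)).trans (Equiv.Set.sumCompl (Set.range g))), ?_⟩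
  intro r
  simp only [Equiv.trans_apply]
  rw [Equiv.Set.sumCompl_symm_apply_of_mem (Set.mem_range_self r)]
  simp only [Equiv.sumCongr_apply, Sum.map_inl, Equiv.trans_apply,
    Equiv.ofInjective_symm_apply, Equiv.ofInjective_apply, Equiv.Set.sumCompl_apply_inl]

end Aux

def boost (n : ℕ) : Matrix (Fin n) (Fin n) ℝ := Matrix.of fun i j =>
  if (i:ℕ) = 0 ∧ (j:ℕ) = 0 then 5/4
  else if (i:ℕ) = 1 ∧ (j:ℕ) = 1 then 5/4
  else if ((i:ℕ) = 0 ∧ (j:ℕ) = 1) ∨ ((i:ℕ) = 1 ∧ (j:ℕ) = 0) then 3/4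
  else if i = j then 1 else 0

variable {n : ℕ}

lemma boost_apply (i j : Fin n) : boost n i j =
    if (i:ℕ) = 0 ∧ (j:ℕ) = 0 then 5/4
    else if (i:ℕ) = 1 ∧ (j:ℕ) = 1 then 5/4
    else if ((i:ℕ) = 0 ∧ (j:ℕ) = 1) ∨ ((i:ℕ) = 1 ∧ (j:ℕ) = 0) then 3/4
    else if i = j then 1 else 0 := rfl

lemma boost_apply_of_ne (i j : Fin n) (h0 : (i:ℕ) ≠ 0) (h1 : (i:ℕ) ≠ 1) :
    boost n i j = if i = j then 1 else 0 := by
  rw [boost_apply, if_neg (by tauto), if_neg (by tauto), if_neg (by tauto)]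

lemma isLorentz_boost (hn : 2 ≤ n) : IsLorentz n (boost n) := by
  have h0n : 0 < n := by omega
  have h1n : 1 < n := by omega
  set i0 : Fin n := ⟨0, h0n⟩ with hi0
  set i1 : Fin n := ⟨1, h1n⟩ with hi1
  have hne10 : i1 ≠ i0 := by simp [hi0, hi1, Fin.ext_iff]
  unfold IsLorentz etaMat
  ext j k
  rw [Matrix.mul_assoc, Matrix.mul_apply]
  set f : Fin n → ℝ := fun i => boost n i j * (eps n i * boost n i k) with hf
  have hterm : ∀ i, (boost n)ᵀ j i * (Matrix.diagonal (eps n) * boost n) i k = f i := by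
    intro i
    rw [Matrix.transpose_apply, Matrix.diagonal_mul]
  rw [Finset.sum_congr rfl (fun i _ => hterm i)]
  have h2 : ∑ i ∈ ((Finset.univ.erase i0).erase i1), f i + f i1
      = ∑ i ∈ Finset.univ.erase i0, f i :=
    Finset.sum_erase_add _ _ (Finset.mem_erase.mpr ⟨hne10, Finset.mem_univ _⟩)
  have h1 : ∑ i ∈ Finset.univ.erase i0, f i + f i0 = ∑ i, f i :=
    Finset.sum_erase_add _ _ (Finset.mem_univ _)
  rw [← h1, ← h2]
  have htail : ∑ i ∈ ((Finset.univ.erase i0).erase i1), f i =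
      if j = k ∧ j ≠ i0 ∧ j ≠ i1 then 1 else 0 := by
    have hmem : ∀ i ∈ (Finset.univ.erase i0).erase i1, (i:ℕ) ≠ 0 ∧ (i:ℕ) ≠ 1 := by
      intro i hi
      rw [Finset.mem_erase, Finset.mem_erase] at hi
      constructor
      · intro hc; exact hi.2.1 (Fin.ext hc)
      · intro hc; exact hi.1 (Fin.ext hc)
    by_cases hj : j ≠ i0 ∧ j ≠ i1
    · by_cases hjk : j = k
      · subst hjk
        rw [if_pos ⟨rfl, hj⟩]
        have hjmem : j ∈ (Finset.univ.erase i0).erase i1 :=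
          Finset.mem_erase.mpr ⟨hj.2, Finset.mem_erase.mpr ⟨hj.1, Finset.mem_univ _⟩⟩
        rw [Finset.sum_eq_single_of_mem j hjmem]
        · obtain ⟨hj0, hj1⟩ := hmem j hjmem
          rw [hf]
          simp only
          rw [boost_apply_of_ne _ _ hj0 hj1, if_pos rfl]
          have : eps n j = 1 := by simp [eps, hj0]
          rw [this]; ring
        · intro i hi hij
          obtain ⟨hi0', hi1'⟩ := hmem i hi
          rw [hf]
          simp only
          rw [boost_apply_of_ne _ _ hi0' hi1', if_neg hij, zero_mul]
      · rw [if_neg (by tauto)]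
        apply Finset.sum_eq_zero
        intro i hi
        obtain ⟨hi0', hi1'⟩ := hmem i hi
        rw [hf]
        simp only
        rw [boost_apply_of_ne _ _ hi0' hi1']
        by_cases hij : i = j
        · subst hij
          rw [boost_apply_of_ne _ _ hi0' hi1', if_neg hjk, mul_zero, mul_zero]
        · rw [if_neg hij, zero_mul]
    · rw [if_neg (by tauto)]
      apply Finset.sum_eq_zero
      intro i hi
      obtain ⟨hi0', hi1'⟩ := hmem i hi
      have hij : i ≠ j := by
        intro hc; subst hc
        rcases not_and_or.mp hj with h | h
        · exact hi0' (by simpa [hi0, Fin.ext_iff] using not_not.mp h)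
        · exact hi1' (by simpa [hi1, Fin.ext_iff] using not_not.mp h)
      rw [hf]
      simp only
      rw [boost_apply_of_ne _ _ hi0' hi1', if_neg hij, zero_mul]
  rw [htail, hf]
  simp only
  have e0 : eps n i0 = -1 := by simp [eps, hi0]
  have e1 : eps n i1 = 1 := by simp [eps, hi1]
  rw [e0, e1]
  have hv0 : (i0:ℕ) = 0 := rfl
  have hv1 : (i1:ℕ) = 1 := rfl
  by_cases hj0 : j = i0
  · subst hj0
    by_cases hk0 : k = i0
    · subst hk0
      rw [Matrix.diagonal_apply_eq, e0]
      rw [if_neg (by simp [hne10.symm])]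
      simp [boost_apply, hv0, hv1]
      norm_num
    · rw [Matrix.diagonal_apply_ne _ (fun hc => hk0 hc.symm)]
      by_cases hk1 : k = i1
      · subst hk1
        rw [if_neg (by tauto)]
        simp [boost_apply, hv0, hv1, hne10]
        norm_num
      · rw [if_neg (by tauto)]
        have hk0' : (k:ℕ) ≠ 0 := fun hc => hk0 (Fin.ext hc)
        have hk1' : (k:ℕ) ≠ 1 := fun hc => hk1 (Fin.ext hc)
        simp [boost_apply, hv0, hv1, hk0', hk1', hne10, Ne.symm hk0, Ne.symm hk1]
  · by_cases hj1 : j = i1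
    · subst hj1
      by_cases hk0 : k = i0
      · subst hk0
        rw [Matrix.diagonal_apply_ne _ hj0, if_neg (by tauto)]
        simp [boost_apply, hv0, hv1, hne10]
        norm_num
      · by_cases hk1 : k = i1
        · subst hk1
          rw [Matrix.diagonal_apply_eq, e1, if_neg (by tauto)]
          simp [boost_apply, hv0, hv1, hne10]
          norm_num
        · rw [Matrix.diagonal_apply_ne _ (fun hc => hk1 (by rw [hc])), if_neg (by tauto)]
          have hk0' : (k:ℕ) ≠ 0 := fun hc => hk0 (Fin.ext hc)
          have hk1' : (k:ℕ) ≠ 1 := fun hc => hk1 (Fin.ext hc)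
          simp [boost_apply, hv0, hv1, hk0', hk1', hne10, Ne.symm hk0, Ne.symm hk1]
    · have hj0' : (j:ℕ) ≠ 0 := fun hc => hj0 (Fin.ext hc)
      have hj1' : (j:ℕ) ≠ 1 := fun hc => hj1 (Fin.ext hc)
      by_cases hjk : j = k
      · subst hjk
        rw [Matrix.diagonal_apply_eq, if_pos ⟨rfl, hj0, hj1⟩]
        have : eps n j = 1 := by simp [eps, hj0']
        rw [this]
        simp [boost_apply, hv0, hv1, hj0', hj1', Ne.symm hj0, Ne.symm hj1]
      · rw [Matrix.diagonal_apply_ne _ hjk, if_neg (by tauto)]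
        simp [boost_apply, hv0, hv1, hj0', hj1', Ne.symm hj0, Ne.symm hj1]


theorem statement19 (n m : ℕ) (hn : 2 ≤ n) (hm : 1 ≤ m) (hmn : m + 1 ≤ n)
    (η : (Fin (m + 1) → Fin n) → (Fin (m + 1) → Fin n) → ℝ)
    (hanti1 : ∀ (σ : Equiv.Perm (Fin (m + 1))) (I J : Fin (m + 1) → Fin n),
      η (fun r => I (σ r)) J = ((Equiv.Perm.sign σ : ℤ) : ℝ) * η I J)
    (hanti2 : ∀ (σ : Equiv.Perm (Fin (m + 1))) (I J : Fin (m + 1) → Fin n),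
      η I (fun s => J (σ s)) = ((Equiv.Perm.sign σ : ℤ) : ℝ) * η I J)
    (hswap : ∀ I J : Fin (m + 1) → Fin n, η I J = η J I)
    (hlor : ∀ A : Matrix (Fin n) (Fin n) ℝ, IsLorentz n A →
      ∀ I J : Fin (m + 1) → Fin n,
        η I J = ∑ I' : Fin (m + 1) → Fin n, ∑ J' : Fin (m + 1) → Fin n,
          (∏ r, A (I r) (I' r)) * (∏ s, A (J s) (J' s)) * η I' J') :
    ∃ c : ℝ, ∀ ω : (Fin (m + 1) → Fin n) → ℝ,
      (∀ (σ : Equiv.Perm (Fin (m + 1))) (I : Fin (m + 1) → Fin n),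
        ω (fun r => I (σ r)) = ((Equiv.Perm.sign σ : ℤ) : ℝ) * ω I) →
      (∑ I : Fin (m + 1) → Fin n, ∑ J : Fin (m + 1) → Fin n, η I J * ω I * ω J) =
        c * ∑ I : Fin (m + 1) → Fin n, (∏ r, eps n (I r)) * ω I ^ 2 := by
  classical
  have h0n : 0 < n := by omega
  have h1n : 1 < n := by omega
  set i0 : Fin n := ⟨0, h0n⟩ with hi0def
  -- squares of signs
  have hsgn : ∀ σ : Equiv.Perm (Fin (m+1)),
      ((Equiv.Perm.sign σ : ℤ) : ℝ) * ((Equiv.Perm.sign σ : ℤ) : ℝ) = 1 := by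
    intro σ
    rcases Int.units_eq_one_or (Equiv.Perm.sign σ) with h | h <;> rw [h] <;> norm_num
  -- non-injective tuples admit a sign-reversing stabilizing permutation
  have hnoninj : ∀ K : Fin (m+1) → Fin n, ¬ Injective K →
      ∃ σ : Equiv.Perm (Fin (m+1)), (fun r => K (σ r)) = K ∧
        ((Equiv.Perm.sign σ : ℤ) : ℝ) = -1 := by
    intro K hK
    rw [Injective] at hK
    push_neg at hK
    obtain ⟨a, b, hab, hne⟩ := hK
    refine ⟨Equiv.swap a b, ?_, ?_⟩
    · funext r
      rcases eq_or_ne r a with rfl | hra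
      · rw [Equiv.swap_apply_left, hab]
      · rcases eq_or_ne r b with rfl | hrb
        · rw [Equiv.swap_apply_right, hab]
        · rw [Equiv.swap_apply_of_ne_of_ne hra hrb]
    · rw [Equiv.Perm.sign_swap hne]
      norm_num
  have hzero1 : ∀ I J : Fin (m+1) → Fin n, ¬ Injective I → η I J = 0 := by
    intro I J hI
    obtain ⟨σ, hσ, hsign⟩ := hnoninj I hI
    have h := hanti1 σ I J
    rw [hσ, hsign] at h
    linarith
  have hzero2 : ∀ I J : Fin (m+1) → Fin n, ¬ Injective J → η I J = 0 := by
    intro I J hJ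
    obtain ⟨σ, hσ, hsign⟩ := hnoninj J hJ
    have h := hanti2 σ I J
    rw [hσ, hsign] at h
    linarith
  -- generic single collapse of the Lorentz invariance identity
  have hsingle : ∀ (A : Matrix (Fin n) (Fin n) ℝ), IsLorentz n A →
      ∀ (I J gI gJ : Fin (m+1) → Fin n),
      (∀ r j, j ≠ gI r → A (I r) j = 0) → (∀ s j, j ≠ gJ s → A (J s) j = 0) →
      η I J = (∏ r, A (I r) (gI r)) * ((∏ s, A (J s) (gJ s)) * η gI gJ) := by
    intro A hA I J gI gJ hgI hgJ
    have hD := hlor A hA I J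
    have e1 : (∑ I' : Fin (m+1) → Fin n, ∑ J' : Fin (m+1) → Fin n,
        (∏ r, A (I r) (I' r)) * (∏ s, A (J s) (J' s)) * η I' J')
        = ∑ I' : Fin (m+1) → Fin n, (∏ r, (fun r j => A (I r) j) r (I' r)) *
          ∑ J' : Fin (m+1) → Fin n, (∏ s, (fun s j => A (J s) j) s (J' s)) * η I' J' :=
      Finset.sum_congr rfl (fun I' _ => by
        rw [Finset.mul_sum]
        exact Finset.sum_congr rfl (fun J' _ => by ring))
    have e2 := sum_prod_single (fun r j => A (I r) j) gI hgI
      (fun I' => ∑ J' : Fin (m+1) → Fin n, (∏ s, (fun s j => A (J s) j) s (J' s)) * η I' J')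
    have e3 := sum_prod_single (fun s j => A (J s) j) gJ hgJ (fun J' => η gI J')
    exact hD.trans (e1.trans (e2.trans
      (congrArg (fun t => (∏ r, A (I r) (gI r)) * t) e3)))
  -- generic double collapse
  have hdouble : ∀ (A : Matrix (Fin n) (Fin n) ℝ), IsLorentz n A →
      ∀ (g g' : Fin (m+1) → Fin n) (r₀ : Fin (m+1)),
      (∀ r, r ≠ r₀ → g r = g' r) → g r₀ ≠ g' r₀ →
      (∀ r j, j ≠ g r → j ≠ g' r → A (g r) j = 0) →
      η g g = (∏ r, A (g r) (g r)) *
          ((∏ s, A (g s) (g s)) * η g g + (∏ s, A (g s) (g' s)) * η g g')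
        + (∏ r, A (g r) (g' r)) *
          ((∏ s, A (g s) (g s)) * η g' g + (∏ s, A (g s) (g' s)) * η g' g') := by
    intro A hA g g' r₀ hoff hne hsupp
    have hD := hlor A hA g g
    have e1 : (∑ I' : Fin (m+1) → Fin n, ∑ J' : Fin (m+1) → Fin n,
        (∏ r, A (g r) (I' r)) * (∏ s, A (g s) (J' s)) * η I' J')
        = ∑ I' : Fin (m+1) → Fin n, (∏ r, (fun r j => A (g r) j) r (I' r)) *
          ∑ J' : Fin (m+1) → Fin n, (∏ s, (fun s j => A (g s) j) s (J' s)) * η I' J' :=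
      Finset.sum_congr rfl (fun I' _ => by
        rw [Finset.mul_sum]
        exact Finset.sum_congr rfl (fun J' _ => by ring))
    have e2 := sum_prod_double (fun r j => A (g r) j) g g' r₀ hoff hne hsupp
      (fun I' => ∑ J' : Fin (m+1) → Fin n, (∏ s, (fun s j => A (g s) j) s (J' s)) * η I' J')
    have e3 : ∀ I' : Fin (m+1) → Fin n,
        (∑ J' : Fin (m+1) → Fin n, (∏ s, (fun s j => A (g s) j) s (J' s)) * η I' J')
        = (∏ s, A (g s) (g s)) * η I' g + (∏ s, A (g s) (g' s)) * η I' g' :=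
      fun I' => sum_prod_double (fun s j => A (g s) j) g g' r₀ hoff hne hsupp
        (fun J' => η I' J')
    exact hD.trans (e1.trans (e2.trans
      (congrArg₂ (fun x y => (∏ r, A (g r) (g r)) * x + (∏ r, A (g r) (g' r)) * y)
        (e3 g) (e3 g'))))
  -- sign-flip consequence
  have hflip : ∀ (v : Fin n) (I J : Fin (m+1) → Fin n), η I J =
      (∏ r, if I r = v then (-1:ℝ) else 1) *
      ((∏ s, if J s = v then (-1:ℝ) else 1) * η I J) := by
    intro v I J
    have hs : ∀ (K : Fin (m+1) → Fin n) (r : Fin (m+1)) (j : Fin n), j ≠ K r →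
        (Matrix.diagonal (fun i : Fin n => if i = v then (-1:ℝ) else 1)) (K r) j = 0 :=
      fun K r j hj => Matrix.diagonal_apply_ne _ (fun hc => hj hc.symm)
    have h := hsingle _ (isLorentz_flip v) I J I J (hs I) (hs J)
    have hd : ∀ K : Fin (m+1) → Fin n,
        (∏ r, (Matrix.diagonal (fun i : Fin n => if i = v then (-1:ℝ) else 1)) (K r) (K r))
        = ∏ r, if K r = v then (-1:ℝ) else 1 :=
      fun K => Finset.prod_congr rfl (fun r _ => Matrix.diagonal_apply_eq _ _)
    rw [hd I, hd J] at h
    exact h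
  have hvanish : ∀ (I J : Fin (m+1) → Fin n) (v : Fin n), Injective I → Injective J →
      v ∈ Set.range I → v ∉ Set.range J → η I J = 0 := by
    intro I J v hI hJ hvI hvJ
    have h := hflip v I J
    rw [prod_flip I hI v, prod_flip J hJ v, if_pos hvI, if_neg hvJ] at h
    linarith
  have hrange : ∀ I J : Fin (m+1) → Fin n, Injective I → Injective J →
      Set.range I ≠ Set.range J → η I J = 0 := by
    intro I J hI hJ hne
    have hex : ∃ v, (v ∈ Set.range I ∧ v ∉ Set.range J) ∨
        (v ∈ Set.range J ∧ v ∉ Set.range I) := by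
      by_contra hc
      push_neg at hc
      apply hne
      ext v
      have := hc v
      tauto
    obtain ⟨v, hv | hv⟩ := hex
    · exact hvanish I J v hI hJ hv.1 hv.2
    · rw [hswap]
      exact hvanish J I v hJ hI hv.1 hv.2
  -- permutation invariance
  have hpermcol : ∀ (π : Equiv.Perm (Fin n)), π i0 = i0 →
      ∀ K : Fin (m+1) → Fin n, η (fun r => π (K r)) (fun r => π (K r)) = η K K := by
    intro π hπ0 K
    have hA : IsLorentz n (Matrix.of fun i j => if i = π j then (1:ℝ) else 0) :=
      isLorentz_perm h0n π (by rw [← hi0def]; exact hπ0)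
    have hs : ∀ (r : Fin (m+1)) (j : Fin n), j ≠ K r →
        (Matrix.of fun i j => if i = π j then (1:ℝ) else 0) ((fun r => π (K r)) r) j = 0 := by
      intro r j hj
      simp only [Matrix.of_apply]
      exact if_neg (fun hc => hj (π.injective hc).symm)
    have h := hsingle _ hA (fun r => π (K r)) (fun r => π (K r)) K K hs hs
    have hcoef : (∏ r, (Matrix.of fun i j => if i = π j then (1:ℝ) else 0)
        ((fun r => π (K r)) r) (K r)) = 1 :=
      Finset.prod_eq_one (fun r _ => by simp)
    rw [hcoef, one_mul, one_mul] at h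
    exact h
  -- the reference tuple
  set I₀ : Fin (m+1) → Fin n := fun r => ⟨(r:ℕ), by have := r.isLt; omega⟩ with hI₀def
  have hI₀inj : Injective I₀ := by
    intro a b hab
    have := congrArg Fin.val hab
    exact Fin.ext (by simpa [hI₀def] using this)
  have hI₀0 : I₀ 0 = i0 := by
    rw [hI₀def, hi0def]
    exact Fin.ext (by simp)
  -- claim A: all injective tuples containing i0 give the same value
  have claimA : ∀ I : Fin (m+1) → Fin n, Injective I → i0 ∈ Set.range I →
      η I I = η I₀ I₀ := by
    intro I hI h0mem
    obtain ⟨r₀, hr₀⟩ := h0mem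
    set σ := Equiv.swap (0 : Fin (m+1)) r₀ with hσdef
    set I' : Fin (m+1) → Fin n := fun r => I (σ r) with hI'def
    have hI'0 : I' 0 = i0 := by
      rw [hI'def]
      simp only [hσdef, Equiv.swap_apply_left]
      exact hr₀
    have hstep1 : η I' I' = η I I := by
      have h1 := hanti1 σ I (fun s => I (σ s))
      have h2 := hanti2 σ I I
      rw [h2] at h1
      rw [hI'def]
      rw [h1, ← mul_assoc, hsgn, one_mul]
    have hI'inj : Injective I' := hI.comp σ.injective
    obtain ⟨π, hπ⟩ := exists_perm_extend I₀ I' hI₀inj hI'inj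
    have hπ0 : π i0 = i0 := by
      have h := hπ 0
      rw [hI₀0, hI'0] at h
      exact h
    have hfun : (fun r => π (I₀ r)) = I' := funext hπ
    have h := hpermcol π hπ0 I₀
    rw [hfun] at h
    rw [← hstep1, h]
  -- claim B
  have claimB : ∀ I : Fin (m+1) → Fin n, Injective I → i0 ∉ Set.range I →
      η I I = -η I₀ I₀ := by
    intro I hI h0I
    have hconsI : Injective (Fin.cons i0 I : Fin (m+2) → Fin n) :=
      Fin.cons_injective_iff.mpr ⟨h0I, hI⟩
    have hn2 : m + 2 ≤ n := by
      have := Fintype.card_le_of_injective _ hconsI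
      simp at this; omega
    -- the boost witnesses
    set Ib : Fin (m+1) → Fin n :=
      fun r => if (r:ℕ) = 0 then ⟨0, h0n⟩ else ⟨(r:ℕ)+1, by have := r.isLt; omega⟩
      with hIbdef
    set Ib' : Fin (m+1) → Fin n :=
      fun r => if (r:ℕ) = 0 then ⟨1, h1n⟩ else ⟨(r:ℕ)+1, by have := r.isLt; omega⟩
      with hIb'def
    have hvalb : ∀ r : Fin (m+1), (Ib r : ℕ) = if (r:ℕ) = 0 then 0 else (r:ℕ)+1 := by
      intro r
      rw [hIbdef]
      split_ifs with h <;> simp [h]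
    have hvalb' : ∀ r : Fin (m+1), (Ib' r : ℕ) = if (r:ℕ) = 0 then 1 else (r:ℕ)+1 := by
      intro r
      rw [hIb'def]
      split_ifs with h <;> simp [h]
    have hIbinj : Injective Ib := by
      intro a b h
      have h' := congrArg Fin.val h
      rw [hvalb a, hvalb b] at h'
      apply Fin.ext
      split_ifs at h' <;> omega
    have hIb'inj : Injective Ib' := by
      intro a b h
      have h' := congrArg Fin.val h
      rw [hvalb' a, hvalb' b] at h'
      apply Fin.ext
      split_ifs at h' <;> omega
    have hIb0 : Ib 0 = i0 := by
      apply Fin.ext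
      rw [hvalb, hi0def]
      simp
    have h0Ib' : i0 ∉ Set.range Ib' := by
      rintro ⟨r, hr⟩
      have h' := congrArg Fin.val hr
      rw [hvalb' r, hi0def] at h'
      simp at h'
      split_ifs at h' <;> omega
    have hoff : ∀ r : Fin (m+1), r ≠ 0 → Ib r = Ib' r := by
      intro r hr
      have hrv : (r:ℕ) ≠ 0 := by
        intro hc
        exact hr (Fin.ext (by simpa using hc))
      apply Fin.ext
      rw [hvalb, hvalb', if_neg hrv, if_neg hrv]
    have hne01 : Ib 0 ≠ Ib' 0 := by
      intro hc
      have := congrArg Fin.val hc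
      rw [hvalb, hvalb'] at this
      simp at this
    have hIbv0 : (Ib 0 : ℕ) = 0 := by rw [hvalb]; simp
    have hIb'v0 : (Ib' 0 : ℕ) = 1 := by rw [hvalb']; simp
    have hvge : ∀ r : Fin (m+1), r ≠ 0 → (Ib r : ℕ) ≠ 0 ∧ (Ib r : ℕ) ≠ 1 := by
      intro r hr
      have hrv : (r:ℕ) ≠ 0 := by
        intro hc
        exact hr (Fin.ext (by simpa using hc))
      rw [hvalb, if_neg hrv]
      omega
    have hsupp : ∀ (r : Fin (m+1)) (j : Fin n), j ≠ Ib r → j ≠ Ib' r →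
        boost n (Ib r) j = 0 := by
      intro r j hj1 hj2
      by_cases hr : r = 0
      · subst hr
        have hj0 : (j:ℕ) ≠ 0 := fun hc => hj1 (Fin.ext (hc.trans hIbv0.symm))
        have hj1' : (j:ℕ) ≠ 1 := fun hc => hj2 (Fin.ext (hc.trans hIb'v0.symm))
        rw [boost_apply, hIbv0]
        simp only [hj0, hj1']
        have : Ib 0 ≠ j := Ne.symm hj1
        simp [this, hj0, hj1']
      · obtain ⟨hv0', hv1'⟩ := hvge r hr
        rw [boost_apply_of_ne _ _ hv0' hv1']
        exact if_neg (Ne.symm hj1)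
    have hc1 : (∏ r, boost n (Ib r) (Ib r)) = 5/4 := by
      rw [Finset.prod_eq_single (0 : Fin (m+1))]
      · rw [boost_apply, hIbv0]
        norm_num
      · intro b _ hb
        obtain ⟨hv0', hv1'⟩ := hvge b hb
        rw [boost_apply_of_ne _ _ hv0' hv1', if_pos rfl]
      · intro hc
        exact absurd (Finset.mem_univ _) hc
    have hc2 : (∏ r, boost n (Ib r) (Ib' r)) = 3/4 := by
      rw [Finset.prod_eq_single (0 : Fin (m+1))]
      · rw [boost_apply, hIbv0, hIb'v0]
        norm_num
      · intro b _ hb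
        obtain ⟨hv0', hv1'⟩ := hvge b hb
        rw [boost_apply_of_ne _ _ hv0' hv1', ← hoff b hb, if_pos rfl]
      · intro hc
        exact absurd (Finset.mem_univ _) hc
    have hx1 : η Ib Ib' = 0 :=
      hvanish Ib Ib' i0 hIbinj hIb'inj ⟨0, hIb0⟩ h0Ib'
    have hx2 : η Ib' Ib = 0 := by
      rw [hswap]
      exact hx1
    have hb := hdouble (boost n) (isLorentz_boost hn) Ib Ib' 0 hoff hne01 hsupp
    rw [hc1, hc2, hx1, hx2] at hb
    have hbb' : η Ib' Ib' = -η Ib Ib := by linarith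
    have hIbA : η Ib Ib = η I₀ I₀ := claimA Ib hIbinj ⟨0, hIb0⟩
    -- transport from Ib' to I
    have hconsIb' : Injective (Fin.cons i0 Ib' : Fin (m+2) → Fin n) :=
      Fin.cons_injective_iff.mpr ⟨h0Ib', hIb'inj⟩
    obtain ⟨π, hπ⟩ := exists_perm_extend (Fin.cons i0 Ib' : Fin (m+2) → Fin n)
      (Fin.cons i0 I : Fin (m+2) → Fin n) hconsIb' hconsI
    have hπ0 : π i0 = i0 := by
      have h := hπ 0
      simpa using h
    have hπr : ∀ r : Fin (m+1), π (Ib' r) = I r := by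
      intro r
      have h := hπ r.succ
      simpa using h
    have hfun : (fun r => π (Ib' r)) = I := funext hπr
    have h := hpermcol π hπ0 Ib'
    rw [hfun] at h
    rw [h, hbb', hIbA]
  -- product of eps over an injective tuple
  have hprodeps : ∀ I : Fin (m+1) → Fin n, Injective I →
      (∏ r, eps n (I r)) = if i0 ∈ Set.range I then -1 else 1 := by
    intro I hI
    rw [← prod_flip I hI i0]
    apply Finset.prod_congr rfl
    intro r _
    rw [eps_eq h0n, hi0def]
  have claimP3 : ∀ I : Fin (m+1) → Fin n, Injective I →
      η I I = -η I₀ I₀ * ∏ r, eps n (I r) := by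
    intro I hI
    by_cases h0 : i0 ∈ Set.range I
    · rw [hprodeps I hI, if_pos h0, claimA I hI h0]
      ring
    · rw [hprodeps I hI, if_neg h0, claimB I hI h0]
      ring
  -- conclusion
  refine ⟨-(Nat.factorial (m+1) : ℝ) * η I₀ I₀, ?_⟩
  intro ω hω
  have hω0 : ∀ I : Fin (m+1) → Fin n, ¬ Injective I → ω I = 0 := by
    intro I hI
    obtain ⟨σ, hσ, hsign⟩ := hnoninj I hI
    have h := hω σ I
    rw [hσ, hsign] at h
    linarith
  have keyJ : ∀ I : Fin (m+1) → Fin n,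
      (∑ J : Fin (m+1) → Fin n, η I J * ω J)
        = (Nat.factorial (m+1) : ℝ) * (η I I * ω I) := by
    intro I
    by_cases hI : Injective I
    · have hsub : ∀ J ∈ Finset.univ, J ∉ Finset.univ.image
          (fun σ : Equiv.Perm (Fin (m+1)) => fun s => I (σ s)) → η I J * ω J = 0 := by
        intro J _ hJ
        by_cases hJinj : Injective J
        · by_cases hr : Set.range J = Set.range I
          · exfalso
            apply hJ
            rw [Finset.mem_image]
            have hsub' : ∀ s, J s ∈ Set.range I := fun s => hr ▸ Set.mem_range_self s
            set t : Fin (m+1) → Fin (m+1) := fun s => Function.invFun I (J s) with htdef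
            have hIt : ∀ s, I (t s) = J s := fun s => Function.invFun_eq (hsub' s)
            have htinj : Injective t := fun a b hab =>
              hJinj (by rw [← hIt a, ← hIt b, hab])
            have htbij := Finite.injective_iff_bijective.mp htinj
            refine ⟨Equiv.ofBijective t htbij, Finset.mem_univ _, ?_⟩
            funext s
            exact hIt s
          · rw [hrange I J hI hJinj (fun hc => hr hc.symm), zero_mul]
        · rw [hzero2 I J hJinj, zero_mul]
      rw [← Finset.sum_subset (Finset.subset_univ _) hsub]
      rw [Finset.sum_image (by
        intro σ _ τ _ h
        ext r
        exact congrArg Fin.val (hI (congrFun h r)))]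
      have hterm : ∀ σ : Equiv.Perm (Fin (m+1)),
          η I (fun s => I (σ s)) * ω (fun s => I (σ s)) = η I I * ω I := by
        intro σ
        rw [hanti2 σ I I, hω σ I, mul_mul_mul_comm, hsgn, one_mul]
      rw [Finset.sum_congr rfl (fun σ _ => hterm σ), Finset.sum_const, Finset.card_univ,
        Fintype.card_perm, Fintype.card_fin, nsmul_eq_mul]
    · rw [Finset.sum_eq_zero (fun J _ => by rw [hzero1 I J hI, zero_mul]),
        hzero1 I I hI]
      ring
  calc (∑ I : Fin (m+1) → Fin n, ∑ J : Fin (m+1) → Fin n, η I J * ω I * ω J)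
      = ∑ I : Fin (m+1) → Fin n, ω I * (∑ J : Fin (m+1) → Fin n, η I J * ω J) :=
        Finset.sum_congr rfl (fun I _ => by
          rw [Finset.mul_sum]
          exact Finset.sum_congr rfl (fun J _ => by ring))
    _ = ∑ I : Fin (m+1) → Fin n,
          ω I * ((Nat.factorial (m+1) : ℝ) * (η I I * ω I)) :=
        Finset.sum_congr rfl (fun I _ => by rw [keyJ I])
    _ = ∑ I : Fin (m+1) → Fin n,
          (-(Nat.factorial (m+1) : ℝ) * η I₀ I₀) * ((∏ r, eps n (I r)) * ω I ^ 2) := by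
        apply Finset.sum_congr rfl
        intro I _
        by_cases hI : Injective I
        · rw [claimP3 I hI]
          ring
        · rw [hω0 I hI]
          ring
    _ = -(Nat.factorial (m+1) : ℝ) * η I₀ I₀ *
          ∑ I : Fin (m+1) → Fin n, (∏ r, eps n (I r)) * ω I ^ 2 := by
        rw [Finset.mul_sum]


end GeomActions
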